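/- Let m ≥ 1 and r ≥ 1 and let (N_1,…,N_r), N_i = [l_i, g_i] ⊆ {1,…,m+r}, be a lattice path presentation such that M[N] is a connected matroid. Then the set C = {l_1, l_2, …, l_r, g_r} has exactly r+1 elements and is a spanning circuit of M[N]. In particular, every connected lattice path matroid with at least two elements has a spanning circuit. -/

import Mathlib

open Set
open scoped Matroid

namespace LPM

variable {α β : Type*}

/-- `I` is a partial transversal of the set family `N`: there is an injection
matching each element of `I` to an index of a member of the family containing it. -/
def IsPT {ι : Type*} (N : ι → Set α) (I : Set α) : Prop :=
  ∃ f : I → ι, Function.Injective f ∧ ∀ x : I, (x : α) ∈ N (f x)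

/-- `I` is a (full) transversal of the set family `N`: there is a bijection
matching each element of `I` to an index of a member of the family containing it. -/
def IsT {ι : Type*} (N : ι → Set α) (I : Set α) : Prop :=
  ∃ f : I → ι, Function.Bijective f ∧ ∀ x : I, (x : α) ∈ N (f x)

/-- A lattice path presentation with nullity `m` and rank `r`: a sequence of
intervals `[l i, g i] ⊆ {1, …, m + r}` whose left endpoints strictly increase
and whose right endpoints strictly increase. -/
structure LPP (m r : ℕ) where
  l : Fin r → ℕ
  g : Fin r → ℕ
  l_strictMono : StrictMono l
  g_strictMono : StrictMono g
  one_le_l : ∀ i, 1 ≤ l i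
  l_le_g : ∀ i, l i ≤ g i
  g_le : ∀ i, g i ≤ m + r

/-- The intervals of a lattice path presentation. -/
def LPP.N {m r : ℕ} (P : LPP m r) (i : Fin r) : Set ℕ := Set.Icc (P.l i) (P.g i)

/-- `M` is the lattice path matroid `M[N]` of the presentation `P`: the ground set
is `{1, …, m + r}` and the independent sets are exactly the partial transversals
of the intervals of `P`. -/
def IsLPMOf {m r : ℕ} (P : LPP m r) (M : Matroid ℕ) : Prop :=
  M.E = Set.Icc 1 (m + r) ∧
    ∀ I : Set ℕ, M.Indep I ↔ I ⊆ Set.Icc 1 (m + r) ∧ IsPT P.N I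

/-- `M` is isomorphic to `M'`: there is a bijection between the ground sets
carrying independent sets to independent sets in both directions. -/
def IsoTo (M : Matroid α) (M' : Matroid β) : Prop :=
  ∃ f : α → β, Set.BijOn f M.E M'.E ∧ ∀ I ⊆ M.E, (M.Indep I ↔ M'.Indep (f '' I))

/-- A lattice path matroid: a matroid isomorphic to `M[N]` for some lattice path
presentation (presentations with `r = 0` give the rank-zero matroids). -/
def IsLPMatroid (M : Matroid α) : Prop :=
  ∃ (m r : ℕ) (P : LPP m r) (M₀ : Matroid ℕ), IsLPMOf P M₀ ∧ IsoTo M M₀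

/-- A circuit of a matroid: a minimal dependent subset of the ground set. -/
def Circuit (M : Matroid α) (C : Set α) : Prop :=
  C ⊆ M.E ∧ ¬ M.Indep C ∧ ∀ D : Set α, D ⊂ C → M.Indep D

/-- A matroid is connected if every two distinct elements of the ground set lie
in a common circuit. -/
def Connected (M : Matroid α) : Prop :=
  ∀ x ∈ M.E, ∀ y ∈ M.E, x ≠ y → ∃ C, Circuit M C ∧ x ∈ C ∧ y ∈ C

/-- The rank of a set in a matroid: the supremum of the cardinalities of its
independent subsets. -/
noncomputable def rk (M : Matroid α) (X : Set α) : ℕ :=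
  sSup {n | ∃ I, I ⊆ X ∧ M.Indep I ∧ I.ncard = n}

/-- A nontrivial connected flat: a flat that is dependent and whose restriction
is a connected matroid. -/
def NTConnFlat (M : Matroid α) (X : Set α) : Prop :=
  M.IsFlat X ∧ ¬ M.Indep X ∧ Connected (M ↾ X)

/-- Deletion of a set from a matroid. -/
def delete (M : Matroid α) (D : Set α) : Matroid α := M ↾ (M.E \ D)

/-- Contraction of a set in a matroid, defined via duality. -/
def contract (M : Matroid α) (C : Set α) : Matroid α := (delete M✶ C)✶

/-- `Minor M' M` means that `M'` is obtained from `M` by a sequence of deletions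
and contractions. -/
inductive Minor : Matroid α → Matroid α → Prop
  | refl (M : Matroid α) : Minor M M
  | del {M' M : Matroid α} (D : Set α) (h : Minor M' M) : Minor (delete M' D) M
  | con {M' M : Matroid α} (C : Set α) (h : Minor M' M) : Minor (contract M' C) M

end LPM


section Aux

open LPM

variable {m r : ℕ}

lemma aux_isPT_of_range {r : ℕ} {N : Fin r → Set ℕ} {σ : Fin r → ℕ}
    (hinj : Function.Injective σ) (hmem : ∀ i, σ i ∈ N i) {I : Set ℕ}
    (hI : I ⊆ Set.range σ) : IsPT N I := by
  refine ⟨fun x => (hI x.2).choose, ?_, ?_⟩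
  · intro a b hab
    apply Subtype.ext
    rw [← (hI a.2).choose_spec, ← (hI b.2).choose_spec]
    exact congrArg σ hab
  · intro x
    have h := (hI x.2).choose_spec
    rw [← h]
    exact hmem _

lemma aux_card_le (P : LPP m r) {I : Set ℕ} (h : IsPT P.N I) : I.ncard ≤ r := by
  obtain ⟨f, hinj, -⟩ := h
  have h2 := Nat.card_le_card_of_injective f hinj
  rwa [Nat.card_coe_set_eq, Nat.card_eq_fintype_card, Fintype.card_fin] at h2

def auxsig (P : LPP m r) (hr1 : r - 1 < r) (jj : Fin r) : Fin r → ℕ :=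
  fun i => if (i : ℕ) < (jj : ℕ) then P.l i
    else if h : (i : ℕ) = r - 1 then P.g ⟨r - 1, hr1⟩
    else P.l ⟨(i : ℕ) + 1, by have := i.2; omega⟩

lemma auxsig_mem (P : LPP m r) (hr1 : r - 1 < r) (jj : Fin r)
    (key2 : ∀ a (ha : a + 1 < r), P.l ⟨a + 1, ha⟩ ≤ P.g ⟨a, by omega⟩) (i : Fin r) :
    auxsig P hr1 jj i ∈ P.N i := by
  unfold auxsig
  by_cases h1 : (i : ℕ) < (jj : ℕ)
  · rw [if_pos h1]
    exact ⟨le_rfl, P.l_le_g i⟩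
  · rw [if_neg h1]
    by_cases h2 : (i : ℕ) = r - 1
    · rw [dif_pos h2]
      have hi : i = ⟨r - 1, hr1⟩ := Fin.ext h2
      rw [hi]
      exact ⟨P.l_le_g _, le_rfl⟩
    · rw [dif_neg h2]
      refine ⟨le_of_lt (P.l_strictMono ?_), ?_⟩
      · show (i : ℕ) < (i : ℕ) + 1
        omega
      · exact key2 (i : ℕ) (by have := i.2; omega)

lemma auxsig_strictMono (P : LPP m r) (hr1 : r - 1 < r) (jj : Fin r)
    (key1 : P.l ⟨r - 1, hr1⟩ < P.g ⟨r - 1, hr1⟩) : StrictMono (auxsig P hr1 jj) := by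
  have L : ∀ (a b : ℕ) (ha : a < r) (hb : b < r), a ≤ b → P.l ⟨a, ha⟩ ≤ P.l ⟨b, hb⟩ :=
    fun a b ha hb h => P.l_strictMono.monotone h
  have L' : ∀ (a b : ℕ) (ha : a < r) (hb : b < r), a < b → P.l ⟨a, ha⟩ < P.l ⟨b, hb⟩ :=
    fun a b ha hb h => P.l_strictMono h
  intro i1 i2 h12
  have h12' : (i1 : ℕ) < (i2 : ℕ) := h12
  have hi1 : (i1 : ℕ) < r := i1.2
  have hi2 : (i2 : ℕ) < r := i2.2
  have hjj : (jj : ℕ) < r := jj.2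
  unfold auxsig
  by_cases a1 : (i1 : ℕ) < (jj : ℕ)
  · rw [if_pos a1]
    by_cases a2 : (i2 : ℕ) < (jj : ℕ)
    · rw [if_pos a2]
      exact L' _ _ hi1 hi2 h12'
    · rw [if_neg a2]
      by_cases b2 : (i2 : ℕ) = r - 1
      · rw [dif_pos b2]
        exact lt_of_le_of_lt (L (i1 : ℕ) (r - 1) hi1 hr1 (by omega)) key1
      · rw [dif_neg b2]
        exact L' _ _ hi1 (by omega) (by omega)
  · rw [if_neg a1]
    by_cases b1 : (i1 : ℕ) = r - 1
    · exact absurd hi2 (by omega)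
    · rw [dif_neg b1]
      by_cases a2 : (i2 : ℕ) < (jj : ℕ)
      · exact absurd h12' (by omega)
      · rw [if_neg a2]
        by_cases b2 : (i2 : ℕ) = r - 1
        · rw [dif_pos b2]
          exact lt_of_le_of_lt (L ((i1 : ℕ) + 1) (r - 1) (by omega) hr1 (by omega)) key1
        · rw [dif_neg b2]
          exact L' _ _ (by omega) (by omega) (by omega)

lemma auxsig_range (P : LPP m r) (hr1 : r - 1 < r) (jj : Fin r) :
    (Set.range P.l ∪ {P.g ⟨r - 1, hr1⟩}) \ {P.l jj} ⊆ Set.range (auxsig P hr1 jj) := by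
  rintro x ⟨hx, hxne⟩
  have hxne' : x ≠ P.l jj := hxne
  rcases hx with ⟨k, rfl⟩ | hg
  · have hk : (k : ℕ) ≠ (jj : ℕ) := fun h => hxne' (congrArg P.l (Fin.ext h))
    have hjj : (jj : ℕ) < r := jj.2
    have hkr : (k : ℕ) < r := k.2
    by_cases hlt : (k : ℕ) < (jj : ℕ)
    · refine ⟨k, ?_⟩
      unfold auxsig
      rw [if_pos hlt]
    · have hk1 : (k : ℕ) - 1 < r := by omega
      refine ⟨⟨(k : ℕ) - 1, hk1⟩, ?_⟩
      unfold auxsig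
      rw [if_neg (show ¬ (((⟨(k : ℕ) - 1, hk1⟩ : Fin r) : ℕ) < (jj : ℕ)) from by
        show ¬ ((k : ℕ) - 1 < (jj : ℕ)); omega)]
      rw [dif_neg (show ¬ (((⟨(k : ℕ) - 1, hk1⟩ : Fin r) : ℕ) = r - 1) from by
        show ¬ ((k : ℕ) - 1 = r - 1); omega)]
      exact congrArg P.l (Fin.ext (show (k : ℕ) - 1 + 1 = (k : ℕ) by omega))
  · have hg' : x = P.g ⟨r - 1, hr1⟩ := hg
    refine ⟨⟨r - 1, hr1⟩, ?_⟩
    unfold auxsig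
    rw [if_neg (show ¬ (((⟨r - 1, hr1⟩ : Fin r) : ℕ) < (jj : ℕ)) from by
      show ¬ (r - 1 < (jj : ℕ)); have := jj.2; omega)]
    rw [dif_pos (show ((⟨r - 1, hr1⟩ : Fin r) : ℕ) = r - 1 from rfl)]
    exact hg'.symm

lemma aux_ncard_range_l (P : LPP m r) : (Set.range P.l).ncard = r := by
  rw [← Nat.card_coe_set_eq, Nat.card_range_of_injective P.l_strictMono.injective,
    Nat.card_eq_fintype_card, Fintype.card_fin]

lemma aux_rk_eq (P : LPP m r) (M : Matroid ℕ) (hM : IsLPMOf P M) {X : Set ℕ}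
    (h1 : Set.range P.l ⊆ X) (h2 : X ⊆ Set.Icc 1 (m + r)) : rk M X = r := by
  have hub : ∀ n ∈ {n | ∃ I, I ⊆ X ∧ M.Indep I ∧ I.ncard = n}, n ≤ r := by
    rintro n ⟨I, -, hI, rfl⟩
    exact aux_card_le P ((hM.2 I).mp hI).2
  have hmem : r ∈ {n | ∃ I, I ⊆ X ∧ M.Indep I ∧ I.ncard = n} := by
    refine ⟨Set.range P.l, h1, ?_, aux_ncard_range_l P⟩
    rw [hM.2]
    exact ⟨h1.trans h2,
      aux_isPT_of_range (N := P.N) P.l_strictMono.injective (fun i => ⟨le_rfl, P.l_le_g i⟩) subset_rfl⟩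
  show sSup _ = r
  exact le_antisymm (csSup_le ⟨r, hmem⟩ hub) (le_csSup ⟨r, fun n hn => hub n hn⟩ hmem)

end Aux

open LPM in
/-- If `M[N]` is connected (with `m, r ≥ 1`), then
`C = {l 0, …, l (r-1), g (r-1)}` has exactly `r + 1` elements and is a spanning
circuit of `M[N]`. -/
theorem stmt7 {m r : ℕ} (hm : 1 ≤ m) (hr : 1 ≤ r) (P : LPP m r)
    (M : Matroid ℕ) (hM : IsLPMOf P M) (hconn : Connected M) :
    (Set.range P.l ∪ {P.g ⟨r - 1, by omega⟩}).ncard = r + 1 ∧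
    Circuit M (Set.range P.l ∪ {P.g ⟨r - 1, by omega⟩}) ∧
    rk M (Set.range P.l ∪ {P.g ⟨r - 1, by omega⟩}) = rk M M.E := by
  obtain ⟨hE, hIndep⟩ := hM
  have hr1 : r - 1 < r := by omega
  have hlE : ∀ i : Fin r, P.l i ∈ Set.Icc 1 (m + r) :=
    fun i => ⟨P.one_le_l i, le_trans (P.l_le_g i) (P.g_le i)⟩
  have h1E : (1 : ℕ) ∈ M.E := by rw [hE]; exact ⟨le_rfl, by omega⟩
  have hmrE : (m + r) ∈ M.E := by rw [hE]; exact ⟨by omega, le_rfl⟩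
  have L : ∀ (a b : ℕ) (ha : a < r) (hb : b < r), a ≤ b → P.l ⟨a, ha⟩ ≤ P.l ⟨b, hb⟩ :=
    fun a b ha hb h => P.l_strictMono.monotone h
  have G : ∀ (a b : ℕ) (ha : a < r) (hb : b < r), a ≤ b → P.g ⟨a, ha⟩ ≤ P.g ⟨b, hb⟩ :=
    fun a b ha hb h => P.g_strictMono.monotone h
  -- Fact (b): the last interval is not a singleton
  have key1 : P.l ⟨r - 1, hr1⟩ < P.g ⟨r - 1, hr1⟩ := by
    by_contra hlt
    have heq : P.g ⟨r - 1, hr1⟩ = P.l ⟨r - 1, hr1⟩ := le_antisymm (by omega) (P.l_le_g _)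
    have h1t : 1 ≤ P.l ⟨r - 1, hr1⟩ := P.one_le_l _
    have htle : P.l ⟨r - 1, hr1⟩ ≤ m + r := le_trans (P.l_le_g _) (P.g_le _)
    have hgle : ∀ i : Fin r, P.g i ≤ P.l ⟨r - 1, hr1⟩ := by
      intro i
      have h1 := G (i : ℕ) (r - 1) i.2 hr1 (by have := i.2; omega)
      have h2 : P.g i = P.g ⟨(i : ℕ), i.2⟩ := rfl
      omega
    by_cases hcase : P.l ⟨r - 1, hr1⟩ < m + r
    · -- t + 1 is a loop
      set t := P.l ⟨r - 1, hr1⟩ with ht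
      have hxE : (t + 1) ∈ M.E := by rw [hE]; exact ⟨by omega, by omega⟩
      have hxdep : ¬ M.Indep {t + 1} := by
        rw [hIndep]
        rintro ⟨-, f, -, hmem⟩
        have h1 := hmem ⟨t + 1, rfl⟩
        have h2 := hgle (f ⟨t + 1, rfl⟩)
        have h3 : (t + 1 : ℕ) ≤ P.g (f ⟨t + 1, rfl⟩) := h1.2
        omega
      obtain ⟨C, hC, hxC, h1C⟩ := hconn (t + 1) hxE 1 h1E (by omega)
      have hss : ({t + 1} : Set ℕ) ⊂ C := by
        constructor
        · simpa using hxC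
        · intro hsub
          have := hsub h1C
          simp only [Set.mem_singleton_iff] at this
          omega
      exact hxdep (hC.2.2 _ hss)
    · -- l (r-1) = g (r-1) = m + r : coloop
      have htmr : P.l ⟨r - 1, hr1⟩ = m + r := by omega
      obtain ⟨C, hC, h1C, hmrC⟩ := hconn 1 h1E (m + r) hmrE (by omega)
      have hss : C \ {m + r} ⊂ C := by
        constructor
        · exact Set.diff_subset
        · intro hsub
          have := hsub hmrC
          simp at this
      have hD := hC.2.2 _ hss
      rw [hIndep] at hD
      obtain ⟨hDsub, f, finj, fmem⟩ := hD
      apply hC.2.1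
      rw [hIndep]
      refine ⟨hE ▸ hC.1, fun x => if hx : (x : ℕ) = m + r then ⟨r - 1, hr1⟩
        else f ⟨x, x.2, hx⟩, ?_, ?_⟩
      · intro a b hab
        apply Subtype.ext
        by_cases ha : (a : ℕ) = m + r <;> by_cases hb : (b : ℕ) = m + r
        · omega
        · exfalso
          simp only [dif_pos ha, dif_neg hb] at hab
          have hbm := fmem ⟨b, b.2, hb⟩
          rw [← hab] at hbm
          have hb1 : P.l ⟨r - 1, hr1⟩ ≤ (b : ℕ) := hbm.1
          have hb2 : (b : ℕ) ≤ P.g ⟨r - 1, hr1⟩ := hbm.2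
          omega
        · exfalso
          simp only [dif_neg ha, dif_pos hb] at hab
          have ham := fmem ⟨a, a.2, ha⟩
          rw [hab] at ham
          have ha1 : P.l ⟨r - 1, hr1⟩ ≤ (a : ℕ) := ham.1
          have ha2 : (a : ℕ) ≤ P.g ⟨r - 1, hr1⟩ := ham.2
          omega
        · simp only [dif_neg ha, dif_neg hb] at hab
          have h := congrArg Subtype.val (finj hab)
          exact h
      · intro x
        by_cases hx : (x : ℕ) = m + r
        · simp only [dif_pos hx]
          exact ⟨by omega, by omega⟩
        · simp only [dif_neg hx]
          exact fmem _
  -- Fact (a): consecutive intervals overlap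
  have key2 : ∀ a (ha : a + 1 < r), P.l ⟨a + 1, ha⟩ ≤ P.g ⟨a, by omega⟩ := by
    intro a ha
    by_contra hlt
    push_neg at hlt
    have hga1 : 1 ≤ P.g ⟨a, by omega⟩ := le_trans (P.one_le_l _) (P.l_le_g _)
    have hgamr : P.g ⟨a, by omega⟩ < m + r :=
      lt_of_lt_of_le hlt (le_trans (P.l_le_g _) (P.g_le _))
    obtain ⟨C, hC, h1C, hmrC⟩ := hconn 1 h1E (m + r) hmrE (by omega)
    have hlowss : {x ∈ C | x ≤ P.g ⟨a, by omega⟩} ⊂ C := by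
      constructor
      · exact Set.sep_subset _ _
      · intro hsub
        have := (hsub hmrC).2
        omega
    have hhighss : {x ∈ C | ¬ x ≤ P.g ⟨a, by omega⟩} ⊂ C := by
      constructor
      · exact Set.sep_subset _ _
      · intro hsub
        have := (hsub h1C).2
        omega
    have hlow := hC.2.2 _ hlowss
    have hhigh := hC.2.2 _ hhighss
    rw [hIndep] at hlow hhigh
    obtain ⟨-, fl, flinj, flmem⟩ := hlow
    obtain ⟨-, fh, fhinj, fhmem⟩ := hhigh
    have hfl : ∀ y : ↥{x ∈ C | x ≤ P.g ⟨a, by omega⟩}, ((fl y : Fin r) : ℕ) ≤ a := by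
      intro y
      by_contra hgt
      push_neg at hgt
      have hmemy := flmem y
      have h1 : P.l (fl y) ≤ (y : ℕ) := hmemy.1
      have h2 : P.l ⟨a + 1, ha⟩ ≤ P.l (fl y) :=
        L (a + 1) ((fl y : Fin r) : ℕ) ha (fl y).2 (by omega)
      have h3 : (y : ℕ) ≤ P.g ⟨a, by omega⟩ := y.2.2
      omega
    have hfh : ∀ y : ↥{x ∈ C | ¬ x ≤ P.g ⟨a, by omega⟩}, a + 1 ≤ ((fh y : Fin r) : ℕ) := by
      intro y
      by_contra hgt
      push_neg at hgt
      have hmemy := fhmem y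
      have h1 : (y : ℕ) ≤ P.g (fh y) := hmemy.2
      have h2 : P.g (fh y) ≤ P.g ⟨a, by omega⟩ :=
        G ((fh y : Fin r) : ℕ) a (fh y).2 (by omega) (by omega)
      have h3 : ¬ (y : ℕ) ≤ P.g ⟨a, by omega⟩ := y.2.2
      omega
    apply hC.2.1
    rw [hIndep]
    refine ⟨hE ▸ hC.1, fun x => if hx : (x : ℕ) ≤ P.g ⟨a, by omega⟩
      then fl ⟨x, x.2, hx⟩ else fh ⟨x, x.2, hx⟩, ?_, ?_⟩
    · intro x y hxy
      apply Subtype.ext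
      by_cases hx : (x : ℕ) ≤ P.g ⟨a, by omega⟩ <;>
        by_cases hy : (y : ℕ) ≤ P.g ⟨a, by omega⟩
      · simp only [dif_pos hx, dif_pos hy] at hxy
        have h := congrArg Subtype.val (flinj hxy)
        exact h
      · exfalso
        simp only [dif_pos hx, dif_neg hy] at hxy
        have h1 := hfl ⟨x, x.2, hx⟩
        have h2 := hfh ⟨y, y.2, hy⟩
        rw [hxy] at h1
        omega
      · exfalso
        simp only [dif_neg hx, dif_pos hy] at hxy
        have h1 := hfl ⟨y, y.2, hy⟩
        have h2 := hfh ⟨x, x.2, hx⟩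
        rw [hxy] at h2
        omega
      · simp only [dif_neg hx, dif_neg hy] at hxy
        have h := congrArg Subtype.val (fhinj hxy)
        exact h
    · intro x
      by_cases hx : (x : ℕ) ≤ P.g ⟨a, by omega⟩
      · simp only [dif_pos hx]
        exact flmem _
      · simp only [dif_neg hx]
        exact fhmem _
  -- the set C
  have hgnotin : P.g ⟨r - 1, hr1⟩ ∉ Set.range P.l := by
    rintro ⟨i, hi⟩
    have h1 : P.l i ≤ P.l ⟨r - 1, hr1⟩ := L (i : ℕ) (r - 1) i.2 hr1 (by have := i.2; omega)
    omega
  have hCsub : (Set.range P.l ∪ {P.g ⟨r - 1, hr1⟩}) ⊆ Set.Icc 1 (m + r) := by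
    rintro x (⟨i, rfl⟩ | hx)
    · exact hlE i
    · have hx' : x = P.g ⟨r - 1, hr1⟩ := hx
      rw [hx']
      exact ⟨le_trans (P.one_le_l _) (P.l_le_g _), P.g_le _⟩
  have hcard : (Set.range P.l ∪ {P.g ⟨r - 1, hr1⟩}).ncard = r + 1 := by
    rw [Set.union_singleton, Set.ncard_insert_of_notMem hgnotin (Set.finite_range _),
      aux_ncard_range_l]
  refine ⟨hcard, ⟨?_, ?_, ?_⟩, ?_⟩
  · rw [hE]; exact hCsub
  · intro hind
    rw [hIndep] at hind
    have := aux_card_le P hind.2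
    omega
  · intro D hD
    obtain ⟨x, hxC, hxD⟩ := Set.exists_of_ssubset hD
    have hDC : D ⊆ (Set.range P.l ∪ {P.g ⟨r - 1, hr1⟩}) \ {x} := by
      intro y hy
      exact ⟨hD.subset hy, fun h => hxD (by rwa [Set.mem_singleton_iff.mp h] at hy)⟩
    rw [hIndep]
    refine ⟨(hD.subset).trans hCsub, ?_⟩
    rcases hxC with ⟨jj, rfl⟩ | hx
    · exact aux_isPT_of_range (N := P.N) (auxsig_strictMono P hr1 jj key1).injective
        (auxsig_mem P hr1 jj key2) ((hDC.trans (auxsig_range P hr1 jj)))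
    · have hx' : x = P.g ⟨r - 1, hr1⟩ := hx
      refine aux_isPT_of_range (N := P.N) P.l_strictMono.injective
        (fun i => ⟨le_rfl, P.l_le_g i⟩) ?_
      intro y hy
      obtain ⟨hy1, hy2⟩ := hDC hy
      rcases hy1 with h | h
      · exact h
      · exact absurd (by rw [Set.mem_singleton_iff.mp h, hx']; exact rfl : y ∈ ({x} : Set ℕ)) hy2
  · have hrng : Set.range P.l ⊆ M.E := by
      rw [hE]
      rintro y ⟨i, rfl⟩
      exact hlE i
    rw [aux_rk_eq P M ⟨hE, hIndep⟩ Set.subset_union_left hCsub,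
      aux_rk_eq P M ⟨hE, hIndep⟩ hrng (le_of_eq hE)]
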